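/- The map σ ↦ K_σ is a bijection from the unit sphere of Λ²₊V onto the set of complex structures on V compatible with the metric and the orientation, i.e. onto the set of linear maps J : V → V with J∘J = −Id, ⟨JX,JY⟩ = ⟨X,Y⟩ for all X,Y ∈ V, and such that every orthonormal basis of V of the form (e, Je, f, Jf) is positively oriented. -/

import Mathlib

open scoped RealInnerProductSpace

section aux
variable {V L : Type*} [NormedAddCommGroup V] [InnerProductSpace ℝ V]
  [NormedAddCommGroup L] [InnerProductSpace ℝ L]

lemma aux_anticomm (wedge : V →ₗ[ℝ] V →ₗ[ℝ] L) (wedge_self : ∀ v : V, wedge v v = 0)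
    (u v : V) : wedge u v = - wedge v u := by
  have h := wedge_self (u + v)
  simp only [map_add, LinearMap.add_apply, wedge_self] at h
  rw [zero_add, add_zero] at h
  exact eq_neg_of_add_eq_zero_right h

lemma aux_ext (wedge : V →ₗ[ℝ] V →ₗ[ℝ] L)
    (wedge_span : Submodule.span ℝ {x : L | ∃ u v : V, wedge u v = x} = ⊤)
    (z : L) (h : ∀ u v : V, ⟪z, wedge u v⟫ = 0) : z = 0 := by
  have hz : ∀ w ∈ Submodule.span ℝ {x : L | ∃ u v : V, wedge u v = x}, ⟪z, w⟫ = 0 := by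
    intro w hw
    induction hw using Submodule.span_induction with
    | mem x hx => obtain ⟨u, v, rfl⟩ := hx; exact h u v
    | zero => simp
    | add x y _ _ hx hy => simp [inner_add_right, hx, hy]
    | smul a x _ hx => simp [inner_smul_right, hx]
  have := hz z (by rw [wedge_span]; trivial)
  exact inner_self_eq_zero.mp this

lemma aux_vec_ext {ι : Type*} [Fintype ι] (c : OrthonormalBasis ι ℝ V) {x y : V}
    (h : ∀ i, ⟪c i, x⟫ = ⟪c i, y⟫) : x = y := by
  rw [← c.sum_repr' x, ← c.sum_repr' y]
  simp [h]

lemma aux_wedge_expand (wedge : V →ₗ[ℝ] V →ₗ[ℝ] L) (c : OrthonormalBasis (Fin 4) ℝ V)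
    (u v : V) :
    wedge u v = ∑ i : Fin 4, ∑ j : Fin 4, (⟪c i, u⟫ * ⟪c j, v⟫) • wedge (c i) (c j) := by
  conv_lhs => rw [← c.sum_repr' u, ← c.sum_repr' v]
  simp only [map_sum, LinearMap.sum_apply, map_smul, LinearMap.smul_apply, Finset.smul_sum,
    smul_smul]
  rw [Finset.sum_comm]
  exact Finset.sum_congr rfl fun i _ => Finset.sum_congr rfl fun j _ => by rw [mul_comm]

lemma aux_hww (wedge : V →ₗ[ℝ] V →ₗ[ℝ] L)
    (inner_wedge : ∀ v₁ v₂ v₃ v₄ : V,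
      ⟪wedge v₁ v₂, wedge v₃ v₄⟫ =
        (1 / 2) * (⟪v₁, v₃⟫ * ⟪v₂, v₄⟫ - ⟪v₁, v₄⟫ * ⟪v₂, v₃⟫))
    (c : OrthonormalBasis (Fin 4) ℝ V) (i j k l : Fin 4) :
    ⟪wedge (c i) (c j), wedge (c k) (c l)⟫ =
      1 / 2 * ((if i = k then (1:ℝ) else 0) * (if j = l then (1:ℝ) else 0)
        - (if i = l then (1:ℝ) else 0) * (if j = k then (1:ℝ) else 0)) := by
  have hc := orthonormal_iff_ite.mp c.orthonormal
  rw [inner_wedge, hc, hc, hc, hc]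

lemma aux_ext2 (wedge : V →ₗ[ℝ] V →ₗ[ℝ] L) (wedge_self : ∀ v : V, wedge v v = 0)
    (wedge_span : Submodule.span ℝ {x : L | ∃ u v : V, wedge u v = x} = ⊤)
    (c : OrthonormalBasis (Fin 4) ℝ V) (x y : L)
    (h : ∀ i j : Fin 4, i < j → ⟪x, wedge (c i) (c j)⟫ = ⟪y, wedge (c i) (c j)⟫) :
    x = y := by
  have h' : ∀ i j : Fin 4, ⟪x - y, wedge (c i) (c j)⟫ = 0 := by
    intro i j
    rcases lt_trichotomy i j with hij | rfl | hij
    · rw [inner_sub_left, h i j hij, sub_self]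
    · rw [wedge_self]; simp
    · rw [aux_anticomm wedge wedge_self (c i) (c j), inner_neg_right, inner_sub_left,
        h j i hij]
      ring
  have : x - y = 0 := by
    apply aux_ext wedge wedge_span
    intro u v
    rw [aux_wedge_expand wedge c u v, inner_sum]
    simp [inner_sum, real_inner_smul_right, h']
  exact sub_eq_zero.mp this

lemma aux_repr (wedge : V →ₗ[ℝ] V →ₗ[ℝ] L) (wedge_self : ∀ v : V, wedge v v = 0)
    (wedge_span : Submodule.span ℝ {x : L | ∃ u v : V, wedge u v = x} = ⊤)
    (inner_wedge : ∀ v₁ v₂ v₃ v₄ : V,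
      ⟪wedge v₁ v₂, wedge v₃ v₄⟫ =
        (1 / 2) * (⟪v₁, v₃⟫ * ⟪v₂, v₄⟫ - ⟪v₁, v₄⟫ * ⟪v₂, v₃⟫))
    (c : OrthonormalBasis (Fin 4) ℝ V) (x : L) :
    x = (2 * ⟪wedge (c 0) (c 1), x⟫) • wedge (c 0) (c 1)
      + (2 * ⟪wedge (c 0) (c 2), x⟫) • wedge (c 0) (c 2)
      + (2 * ⟪wedge (c 0) (c 3), x⟫) • wedge (c 0) (c 3)
      + (2 * ⟪wedge (c 1) (c 2), x⟫) • wedge (c 1) (c 2)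
      + (2 * ⟪wedge (c 1) (c 3), x⟫) • wedge (c 1) (c 3)
      + (2 * ⟪wedge (c 2) (c 3), x⟫) • wedge (c 2) (c 3) := by
  apply aux_ext2 wedge wedge_self wedge_span c
  intro i j hij
  fin_cases i <;> fin_cases j <;>
    first
    | exact absurd hij (by decide)
    | (simp only [inner_add_left, real_inner_smul_left, aux_hww wedge inner_wedge c,
        Fin.isValue]
       simp +decide [real_inner_comm x]
       ring)

set_option maxHeartbeats 1000000 in
lemma aux_norm (wedge : V →ₗ[ℝ] V →ₗ[ℝ] L) (wedge_self : ∀ v : V, wedge v v = 0)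
    (wedge_span : Submodule.span ℝ {x : L | ∃ u v : V, wedge u v = x} = ⊤)
    (inner_wedge : ∀ v₁ v₂ v₃ v₄ : V,
      ⟪wedge v₁ v₂, wedge v₃ v₄⟫ =
        (1 / 2) * (⟪v₁, v₃⟫ * ⟪v₂, v₄⟫ - ⟪v₁, v₄⟫ * ⟪v₂, v₃⟫))
    (c : OrthonormalBasis (Fin 4) ℝ V) (σ : L) :
    ⟪σ, σ⟫ = 2 * ⟪wedge (c 0) (c 1), σ⟫ ^ 2 + 2 * ⟪wedge (c 0) (c 2), σ⟫ ^ 2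
      + 2 * ⟪wedge (c 0) (c 3), σ⟫ ^ 2 + 2 * ⟪wedge (c 1) (c 2), σ⟫ ^ 2
      + 2 * ⟪wedge (c 1) (c 3), σ⟫ ^ 2 + 2 * ⟪wedge (c 2) (c 3), σ⟫ ^ 2 := by
  have h := aux_repr wedge wedge_self wedge_span inner_wedge c σ
  conv_lhs => rw [h]
  simp +decide [inner_add_left, inner_add_right, real_inner_smul_left, real_inner_smul_right,
    aux_hww wedge inner_wedge c, -inner_self_eq_norm_sq_to_K]
  ring

lemma aux_selfdual (wedge : V →ₗ[ℝ] V →ₗ[ℝ] L) (wedge_self : ∀ v : V, wedge v v = 0)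
    (wedge_span : Submodule.span ℝ {x : L | ∃ u v : V, wedge u v = x} = ⊤)
    (inner_wedge : ∀ v₁ v₂ v₃ v₄ : V,
      ⟪wedge v₁ v₂, wedge v₃ v₄⟫ =
        (1 / 2) * (⟪v₁, v₃⟫ * ⟪v₂, v₄⟫ - ⟪v₁, v₄⟫ * ⟪v₂, v₃⟫))
    (hodge : L →ₗ[ℝ] L) (hodge_hodge : ∀ x : L, hodge (hodge x) = x)
    (c : OrthonormalBasis (Fin 4) ℝ V) (e : ℝ) (he : e * e = 1)
    (h01 : hodge (wedge (c 0) (c 1)) = e • wedge (c 2) (c 3))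
    (h02 : hodge (wedge (c 0) (c 2)) = e • wedge (c 3) (c 1))
    (h03 : hodge (wedge (c 0) (c 3)) = e • wedge (c 1) (c 2))
    (σ : L) (hσ : hodge σ = σ) :
    ⟪wedge (c 0) (c 1), σ⟫ = e * ⟪wedge (c 2) (c 3), σ⟫ ∧
    ⟪wedge (c 0) (c 2), σ⟫ = -e * ⟪wedge (c 1) (c 3), σ⟫ ∧
    ⟪wedge (c 0) (c 3), σ⟫ = e * ⟪wedge (c 1) (c 2), σ⟫ := by
  have h02' : hodge (wedge (c 0) (c 2)) = (-e) • wedge (c 1) (c 3) := by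
    rw [h02, aux_anticomm wedge wedge_self (c 3) (c 1), smul_neg, neg_smul]
  -- involution consequences
  have inv : ∀ x y : L, hodge x = e • y → hodge y = e • x := by
    intro x y h
    have h1 := hodge_hodge x
    rw [h, map_smul] at h1
    calc hodge y = (e * e) • hodge y := by rw [he, one_smul]
      _ = e • (e • hodge y) := by rw [smul_smul]
      _ = e • x := by rw [h1]
  have h23 : hodge (wedge (c 2) (c 3)) = e • wedge (c 0) (c 1) := inv _ _ h01
  have h31 := inv _ _ h02
  have h13 : hodge (wedge (c 1) (c 3)) = (-e) • wedge (c 0) (c 2) := by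
    rw [aux_anticomm wedge wedge_self (c 1) (c 3), map_neg, h31, neg_smul]
  have h12 : hodge (wedge (c 1) (c 2)) = e • wedge (c 0) (c 3) := inv _ _ h03
  -- expand σ and apply hodge
  have expand := aux_repr wedge wedge_self wedge_span inner_wedge c σ
  have happ : hodge σ =
      (2 * ⟪wedge (c 0) (c 1), σ⟫) • (e • wedge (c 2) (c 3))
      + (2 * ⟪wedge (c 0) (c 2), σ⟫) • ((-e) • wedge (c 1) (c 3))
      + (2 * ⟪wedge (c 0) (c 3), σ⟫) • (e • wedge (c 1) (c 2))
      + (2 * ⟪wedge (c 1) (c 2), σ⟫) • (e • wedge (c 0) (c 3))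
      + (2 * ⟪wedge (c 1) (c 3), σ⟫) • ((-e) • wedge (c 0) (c 2))
      + (2 * ⟪wedge (c 2) (c 3), σ⟫) • (e • wedge (c 0) (c 1)) := by
    conv_lhs => rw [expand]
    rw [map_add, map_add, map_add, map_add, map_add, map_smul, map_smul, map_smul, map_smul,
      map_smul, map_smul, h01, h02', h03, h12, h13, h23]
  rw [hσ] at happ
  have key : ∀ k l : Fin 4, ⟪σ, wedge (c k) (c l)⟫ =
      (2 * ⟪wedge (c 0) (c 1), σ⟫) * (e * ⟪wedge (c 2) (c 3), wedge (c k) (c l)⟫)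
      + (2 * ⟪wedge (c 0) (c 2), σ⟫) * ((-e) * ⟪wedge (c 1) (c 3), wedge (c k) (c l)⟫)
      + (2 * ⟪wedge (c 0) (c 3), σ⟫) * (e * ⟪wedge (c 1) (c 2), wedge (c k) (c l)⟫)
      + (2 * ⟪wedge (c 1) (c 2), σ⟫) * (e * ⟪wedge (c 0) (c 3), wedge (c k) (c l)⟫)
      + (2 * ⟪wedge (c 1) (c 3), σ⟫) * ((-e) * ⟪wedge (c 0) (c 2), wedge (c k) (c l)⟫)
      + (2 * ⟪wedge (c 2) (c 3), σ⟫) * (e * ⟪wedge (c 0) (c 1), wedge (c k) (c l)⟫) := by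
    intro k l
    conv_lhs => rw [happ]
    simp [inner_add_left, real_inner_smul_left]
  refine ⟨?_, ?_, ?_⟩
  · have := key 0 1
    simp +decide [aux_hww wedge inner_wedge c, -inner_self_eq_norm_sq_to_K] at this
    have e1 : ⟪σ, wedge (c 0) (c 1)⟫ = ⟪wedge (c 0) (c 1), σ⟫ := real_inner_comm _ _
    have e2 : ⟪σ, wedge (c 2) (c 3)⟫ = ⟪wedge (c 2) (c 3), σ⟫ := real_inner_comm _ _
    linear_combination this - e1
  · have := key 0 2
    simp +decide [aux_hww wedge inner_wedge c, -inner_self_eq_norm_sq_to_K] at this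
    have e1 : ⟪σ, wedge (c 0) (c 2)⟫ = ⟪wedge (c 0) (c 2), σ⟫ := real_inner_comm _ _
    have e2 : ⟪σ, wedge (c 1) (c 3)⟫ = ⟪wedge (c 1) (c 3), σ⟫ := real_inner_comm _ _
    linear_combination this - e1
  · have := key 0 3
    simp +decide [aux_hww wedge inner_wedge c, -inner_self_eq_norm_sq_to_K] at this
    have e1 : ⟪σ, wedge (c 0) (c 3)⟫ = ⟪wedge (c 0) (c 3), σ⟫ := real_inner_comm _ _
    have e2 : ⟪σ, wedge (c 1) (c 2)⟫ = ⟪wedge (c 1) (c 2), σ⟫ := real_inner_comm _ _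
    linear_combination this - e1

end aux

set_option maxHeartbeats 2000000 in
/-- Let `V` be a 4-dimensional oriented real inner product space, `Λ²V` its
second exterior power with the induced inner product, `⋆` the Hodge star, `Λ²₊V` its
`(+1)`-eigenspace, and for `a ∈ Λ²V` let `K_a : V → V` be defined by `⟨K_aX, Y⟩ = 2⟨a, X∧Y⟩`.
Then `σ ↦ K_σ` is a bijection from the unit sphere of `Λ²₊V` onto the set of complex
structures on `V` compatible with the metric and the orientation, i.e. onto the set of linear
maps `J : V → V` with `J∘J = −Id`, `⟨JX,JY⟩ = ⟨X,Y⟩`, and such that every orthonormal basis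
of `V` of the form `(e, Je, f, Jf)` is positively oriented. -/
theorem stmt_1 {V L : Type*}
    [NormedAddCommGroup V] [InnerProductSpace ℝ V]
    [NormedAddCommGroup L] [InnerProductSpace ℝ L]
    (h4 : Module.finrank ℝ V = 4)
    (o : Orientation ℝ V (Fin 4))
    (wedge : V →ₗ[ℝ] V →ₗ[ℝ] L)
    (wedge_self : ∀ v : V, wedge v v = 0)
    (wedge_span : Submodule.span ℝ {x : L | ∃ u v : V, wedge u v = x} = ⊤)
    (inner_wedge : ∀ v₁ v₂ v₃ v₄ : V,
      ⟪wedge v₁ v₂, wedge v₃ v₄⟫ =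
        (1 / 2) * (⟪v₁, v₃⟫ * ⟪v₂, v₄⟫ - ⟪v₁, v₄⟫ * ⟪v₂, v₃⟫))
    (hodge : L →ₗ[ℝ] L)
    (hodge_hodge : ∀ x : L, hodge (hodge x) = x)
    (hodge_wedge : ∀ b : OrthonormalBasis (Fin 4) ℝ V, b.toBasis.orientation = o →
      hodge (wedge (b 0) (b 1)) = wedge (b 2) (b 3) ∧
      hodge (wedge (b 0) (b 2)) = wedge (b 3) (b 1) ∧
      hodge (wedge (b 0) (b 3)) = wedge (b 1) (b 2))
    (K : L → V →ₗ[ℝ] V)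
    (hK : ∀ (a : L) (X Y : V), ⟪K a X, Y⟫ = 2 * ⟪a, wedge X Y⟫) :
    Set.BijOn K {σ : L | hodge σ = σ ∧ ‖σ‖ = 1}
      {J : V →ₗ[ℝ] V |
        J ∘ₗ J = -LinearMap.id ∧
        (∀ X Y : V, ⟪J X, J Y⟫ = ⟪X, Y⟫) ∧
        ∀ b : OrthonormalBasis (Fin 4) ℝ V,
          b 1 = J (b 0) → b 3 = J (b 2) → b.toBasis.orientation = o} := by
  have hFD : FiniteDimensional ℝ V := FiniteDimensional.of_finrank_pos (by rw [h4]; norm_num)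
  have hKskew : ∀ (a : L) (x y : V), ⟪K a x, y⟫ = -⟪x, K a y⟫ := by
    intro a x y
    have h1 := hK a x y
    have h2 := hK a y x
    rw [aux_anticomm wedge wedge_self y x, inner_neg_right] at h2
    have h3 : ⟪x, K a y⟫ = ⟪K a y, x⟫ := real_inner_comm _ _
    linarith
  refine ⟨?_, ?_, ?_⟩
  · -- MapsTo
    rintro σ ⟨hsd, hn1⟩
    set J := K σ with hJdef
    set c : OrthonormalBasis (Fin 4) ℝ V := o.finOrthonormalBasis (by norm_num) h4 with hcdef
    have hco : c.toBasis.orientation = o := o.finOrthonormalBasis_orientation (by norm_num) h4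
    obtain ⟨H1, H2, H3⟩ := hodge_wedge c hco
    have h01 : hodge (wedge (c 0) (c 1)) = (1:ℝ) • wedge (c 2) (c 3) := by rw [H1, one_smul]
    have h02 : hodge (wedge (c 0) (c 2)) = (1:ℝ) • wedge (c 3) (c 1) := by rw [H2, one_smul]
    have h03 : hodge (wedge (c 0) (c 3)) = (1:ℝ) • wedge (c 1) (c 2) := by rw [H3, one_smul]
    obtain ⟨S1, S2, S3⟩ := aux_selfdual wedge wedge_self wedge_span inner_wedge hodge
      hodge_hodge c 1 (by norm_num) h01 h02 h03 σ hsd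
    rw [one_mul] at S1 S3
    have S2' : ⟪wedge (c 0) (c 2), σ⟫ = -⟪wedge (c 1) (c 3), σ⟫ := by rw [S2]; ring
    have hσσ : ⟪σ, σ⟫ = 1 := by
      rw [real_inner_self_eq_norm_mul_norm, hn1]; norm_num
    have hnorm := aux_norm wedge wedge_self wedge_span inner_wedge c σ
    rw [hσσ] at hnorm
    have hpqr : (2 * ⟪wedge (c 0) (c 1), σ⟫)^2 + (2 * ⟪wedge (c 0) (c 2), σ⟫)^2
        + (2 * ⟪wedge (c 0) (c 3), σ⟫)^2 = 1 := by
      linear_combination (-1) * hnorm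
        + 2 * (⟪wedge (c 0) (c 1), σ⟫ + ⟪wedge (c 2) (c 3), σ⟫) * S1
        + 2 * (⟪wedge (c 0) (c 2), σ⟫ - ⟪wedge (c 1) (c 3), σ⟫) * S2'
        + 2 * (⟪wedge (c 0) (c 3), σ⟫ + ⟪wedge (c 1) (c 2), σ⟫) * S3
    have hJapp : ∀ (x : V) (k : Fin 4), ⟪c k, J x⟫ = 2 * ⟪σ, wedge x (c k)⟫ := by
      intro x k; rw [real_inner_comm, hK]
    have hortho := orthonormal_iff_ite.mp c.orthonormal
    have hJ0 : J (c 0) = (2 * ⟪wedge (c 0) (c 1), σ⟫) • c 1 + (2 * ⟪wedge (c 0) (c 2), σ⟫) • c 2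
        + (2 * ⟪wedge (c 0) (c 3), σ⟫) • c 3 := by
      apply aux_vec_ext c; intro i
      rw [hJapp]
      fin_cases i <;>
        simp +decide [inner_add_right, real_inner_smul_right, hortho, wedge_self,
          real_inner_comm σ]
    have hJ1 : J (c 1) = (-(2 * ⟪wedge (c 0) (c 1), σ⟫)) • c 0
        + (2 * ⟪wedge (c 0) (c 3), σ⟫) • c 2 + (-(2 * ⟪wedge (c 0) (c 2), σ⟫)) • c 3 := by
      apply aux_vec_ext c; intro i
      rw [hJapp]
      fin_cases i <;>
        simp +decide [inner_add_right, real_inner_smul_right, hortho, wedge_self,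
          aux_anticomm wedge wedge_self (c 1) (c 0), S2', S3, real_inner_comm σ]
    have hJ2 : J (c 2) = (-(2 * ⟪wedge (c 0) (c 2), σ⟫)) • c 0
        + (-(2 * ⟪wedge (c 0) (c 3), σ⟫)) • c 1 + (2 * ⟪wedge (c 0) (c 1), σ⟫) • c 3 := by
      apply aux_vec_ext c; intro i
      rw [hJapp]
      fin_cases i <;>
        simp +decide [inner_add_right, real_inner_smul_right, hortho, wedge_self,
          aux_anticomm wedge wedge_self (c 2) (c 0), aux_anticomm wedge wedge_self (c 2) (c 1),
          S1, S3, real_inner_comm σ]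
    have hJ3 : J (c 3) = (-(2 * ⟪wedge (c 0) (c 3), σ⟫)) • c 0
        + (2 * ⟪wedge (c 0) (c 2), σ⟫) • c 1 + (-(2 * ⟪wedge (c 0) (c 1), σ⟫)) • c 2 := by
      apply aux_vec_ext c; intro i
      rw [hJapp]
      fin_cases i <;>
        simp +decide [inner_add_right, real_inner_smul_right, hortho, wedge_self,
          aux_anticomm wedge wedge_self (c 3) (c 0), aux_anticomm wedge wedge_self (c 3) (c 1),
          aux_anticomm wedge wedge_self (c 3) (c 2), S1, S2', real_inner_comm σ]
    have comp0 : J (J (c 0)) = -(c 0) := by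
      rw [hJ0, map_add, map_add, map_smul, map_smul, map_smul, hJ1, hJ2, hJ3]
      match_scalars <;> first | ring1 | linear_combination -hpqr | linear_combination hpqr
    have comp1 : J (J (c 1)) = -(c 1) := by
      rw [hJ1, map_add, map_add, map_smul, map_smul, map_smul, hJ0, hJ2, hJ3]
      match_scalars <;> first | ring1 | linear_combination -hpqr | linear_combination hpqr
    have comp2 : J (J (c 2)) = -(c 2) := by
      rw [hJ2, map_add, map_add, map_smul, map_smul, map_smul, hJ0, hJ1, hJ3]
      match_scalars <;> first | ring1 | linear_combination -hpqr | linear_combination hpqr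
    have comp3 : J (J (c 3)) = -(c 3) := by
      rw [hJ3, map_add, map_add, map_smul, map_smul, map_smul, hJ0, hJ1, hJ2]
      match_scalars <;> first | ring1 | linear_combination -hpqr | linear_combination hpqr
    have hJJ : J ∘ₗ J = -LinearMap.id := by
      apply Module.Basis.ext c.toBasis
      intro i
      simp only [LinearMap.comp_apply, LinearMap.neg_apply, LinearMap.id_apply,
        OrthonormalBasis.coe_toBasis]
      fin_cases i
      · exact comp0
      · exact comp1
      · exact comp2
      · exact comp3
    have hJJ' : ∀ x, J (J x) = -x := by
      intro x
      have := LinearMap.ext_iff.mp hJJ x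
      simpa using this
    have hinner : ∀ X Y : V, ⟪J X, J Y⟫ = ⟪X, Y⟫ := by
      intro X Y
      rw [hKskew σ X (J Y)]
      rw [show K σ (J Y) = J (J Y) from rfl, hJJ' Y, inner_neg_right, neg_neg]
    refine ⟨hJJ, hinner, ?_⟩
    intro b hb1 hb3
    set d := b.adjustToOrientation o with hddef
    have hdo : d.toBasis.orientation = o := b.orientation_adjustToOrientation o
    have hdb : ∀ i, d i = ⟪b i, d i⟫ • b i ∧ ⟪b i, d i⟫ * ⟪b i, d i⟫ = 1 := by
      intro i
      have hbb : ⟪b i, b i⟫ = (1:ℝ) := by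
        have := orthonormal_iff_ite.mp b.orthonormal i i; simpa using this
      rcases b.adjustToOrientation_apply_eq_or_eq_neg o i with h | h
      · rw [h, hbb]; exact ⟨(one_smul ℝ _).symm, by norm_num⟩
      · rw [h, inner_neg_right, hbb]
        exact ⟨by rw [neg_smul, one_smul], by norm_num⟩
    obtain ⟨G1, G2, G3⟩ := hodge_wedge d hdo
    have hsq : ∀ i, ⟪b i, d i⟫ * ⟪b i, d i⟫ = 1 := fun i => (hdb i).2
    obtain ⟨hd0, hs0⟩ := hdb 0
    obtain ⟨hd1, hs1⟩ := hdb 1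
    obtain ⟨hd2, hs2⟩ := hdb 2
    obtain ⟨hd3, hs3⟩ := hdb 3
    have trans : ∀ (i j k l : Fin 4) (εi εj εk εl : ℝ), d i = εi • b i → d j = εj • b j →
        d k = εk • b k → d l = εl • b l → εi * εi = 1 → εj * εj = 1 →
        hodge (wedge (d i) (d j)) = wedge (d k) (d l) →
        hodge (wedge (b i) (b j)) = ((εi * εj) * (εk * εl)) • wedge (b k) (b l) := by
      intro i j k l εi εj εk εl hi hj hk hl si sj hg
      rw [hi, hj, hk, hl] at hg
      simp only [map_smul, LinearMap.smul_apply, smul_smul] at hg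
      have h2 := congrArg (fun z => (εi * εj) • z) hg
      simp only [smul_smul] at h2
      have hc : εi * εj * (εj * εi) = 1 := by
        have hx : εi * εj * (εj * εi) = (εi * εi) * (εj * εj) := by ring
        rw [hx, si, sj]; norm_num
      rw [hc, one_smul] at h2
      rw [h2]
      match_scalars <;> ring
    set e : ℝ := (⟪b 0, d 0⟫ * ⟪b 1, d 1⟫) * (⟪b 2, d 2⟫ * ⟪b 3, d 3⟫) with hedef
    have he2 : e * e = 1 := by
      have h5 : e * e = (⟪b 0, d 0⟫ * ⟪b 0, d 0⟫) * (⟪b 1, d 1⟫ * ⟪b 1, d 1⟫)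
          * ((⟪b 2, d 2⟫ * ⟪b 2, d 2⟫) * (⟪b 3, d 3⟫ * ⟪b 3, d 3⟫)) := by rw [hedef]; ring
      rw [h5, hs0, hs1, hs2, hs3]; norm_num
    have T1 := trans 0 1 2 3 _ _ _ _ hd0 hd1 hd2 hd3 hs0 hs1 G1
    have T2 := trans 0 2 3 1 _ _ _ _ hd0 hd2 hd3 hd1 hs0 hs2 G2
    have T3 := trans 0 3 1 2 _ _ _ _ hd0 hd3 hd1 hd2 hs0 hs3 G3
    rw [show ⟪b 0, d 0⟫ * ⟪b 1, d 1⟫ * (⟪b 2, d 2⟫ * ⟪b 3, d 3⟫) = e from by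
      rw [hedef]] at T1
    rw [show ⟪b 0, d 0⟫ * ⟪b 2, d 2⟫ * (⟪b 3, d 3⟫ * ⟪b 1, d 1⟫) = e from by
      rw [hedef]; ring] at T2
    rw [show ⟪b 0, d 0⟫ * ⟪b 3, d 3⟫ * (⟪b 1, d 1⟫ * ⟪b 2, d 2⟫) = e from by
      rw [hedef]; ring] at T3
    obtain ⟨U1, -, -⟩ := aux_selfdual wedge wedge_self wedge_span inner_wedge hodge
      hodge_hodge b e he2 T1 T2 T3 σ hsd
    have hbb1 : ⟪b 1, b 1⟫ = (1:ℝ) := by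
      have := orthonormal_iff_ite.mp b.orthonormal 1 1; simpa using this
    have hbb3 : ⟪b 3, b 3⟫ = (1:ℝ) := by
      have := orthonormal_iff_ite.mp b.orthonormal 3 3; simpa using this
    have u01 : ⟪wedge (b 0) (b 1), σ⟫ = 1/2 := by
      have hh := hK σ (b 0) (b 1)
      rw [← hb1, hbb1] at hh
      rw [real_inner_comm]
      linarith
    have u23 : ⟪wedge (b 2) (b 3), σ⟫ = 1/2 := by
      have hh := hK σ (b 2) (b 3)
      rw [← hb3, hbb3] at hh
      rw [real_inner_comm]
      linarith
    have he1 : e = 1 := by rw [u01, u23] at U1; linarith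
    rw [← hdo]
    rw [Module.Basis.orientation_eq_iff_det_pos]
    have hdet : b.toBasis.det ⇑d.toBasis = e := by
      rw [Module.Basis.det_apply]
      have hm : b.toBasis.toMatrix ⇑d.toBasis = Matrix.diagonal (fun i => ⟪b i, d i⟫) := by
        ext i j
        rw [Module.Basis.toMatrix_apply, OrthonormalBasis.coe_toBasis,
          OrthonormalBasis.coe_toBasis_repr_apply, OrthonormalBasis.repr_apply_apply,
          (hdb j).1, inner_smul_right, orthonormal_iff_ite.mp b.orthonormal]
        by_cases hij : i = j
        · subst hij; simp [Matrix.diagonal]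
        · simp [Matrix.diagonal, hij, Ne.symm hij]
      rw [hm, Matrix.det_diagonal, Fin.prod_univ_four, hedef]
      ring
    rw [hdet, he1]
    norm_num
  · -- InjOn
    intro a ha b hb hab
    have hz : a - b = 0 := by
      apply aux_ext wedge wedge_span
      intro u v
      have h1 := hK a u v
      have h2 := hK b u v
      rw [hab] at h1
      rw [inner_sub_left]
      linarith
    exact sub_eq_zero.mp hz
  · -- SurjOn
    intro J hJmem
    obtain ⟨hJJ, hJinner, hJor⟩ := hJmem
    have hJJ' : ∀ x, J (J x) = -x := by
      intro x
      have := LinearMap.ext_iff.mp hJJ x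
      simpa using this
    have skew : ∀ x y, ⟪J x, y⟫ = -⟪x, J y⟫ := by
      intro x y
      have h := hJinner x (J y)
      rw [hJJ' y, inner_neg_right] at h
      linarith
    have hnt : Nontrivial V := Module.nontrivial_of_finrank_pos (R := ℝ) (by rw [h4]; norm_num)
    obtain ⟨v0, hv0⟩ := exists_ne (0 : V)
    set e0 : V := ‖v0‖⁻¹ • v0 with he0def
    have he0 : ‖e0‖ = 1 := norm_smul_inv_norm hv0
    have n00 : ⟪e0, e0⟫ = (1:ℝ) := by
      rw [real_inner_self_eq_norm_mul_norm, he0]; norm_num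
    set W : Submodule ℝ V := (Submodule.span ℝ {e0, J e0})ᗮ with hWdef
    have hWne : W ≠ ⊥ := by
      intro hbot
      have htop : Submodule.span ℝ {e0, J e0} = ⊤ :=
        Submodule.orthogonal_eq_bot_iff.mp hbot
      haveI := Classical.decEq V
      have hle := finrank_span_finset_le_card (R := ℝ) ({e0, J e0} : Finset V)
      have hcard : ({e0, J e0} : Finset V).card ≤ 2 :=
        le_trans (Finset.card_insert_le _ _) (by simp)
      have hco2 : (({e0, J e0} : Finset V) : Set V) = ({e0, J e0} : Set V) := by simp
      rw [Set.finrank, hco2] at hle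
      rw [htop, finrank_top, h4] at hle
      omega
    obtain ⟨w0, hw0W, hw0⟩ := Submodule.ne_bot_iff W |>.mp hWne
    set e2 : V := ‖w0‖⁻¹ • w0 with he2def
    have he2 : ‖e2‖ = 1 := norm_smul_inv_norm hw0
    have n22 : ⟪e2, e2⟫ = (1:ℝ) := by
      rw [real_inner_self_eq_norm_mul_norm, he2]; norm_num
    have he2W : e2 ∈ W := W.smul_mem _ hw0W
    have ho1 : ⟪e0, e2⟫ = 0 :=
      he2W e0 (Submodule.subset_span (Set.mem_insert _ _))
    have ho2 : ⟪J e0, e2⟫ = 0 :=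
      he2W (J e0) (Submodule.subset_span (Set.mem_insert_of_mem _ rfl))
    have zxJx : ∀ x : V, ⟪x, J x⟫ = 0 := by
      intro x
      have h := skew x x
      have h2 : ⟪J x, x⟫ = ⟪x, J x⟫ := real_inner_comm _ _
      linarith
    have p00 : ⟪e0, e0⟫ = (1:ℝ) := n00
    have p11 : ⟪J e0, J e0⟫ = (1:ℝ) := by rw [hJinner]; exact n00
    have p22 : ⟪e2, e2⟫ = (1:ℝ) := n22
    have p33 : ⟪J e2, J e2⟫ = (1:ℝ) := by rw [hJinner]; exact n22
    have p01 : ⟪e0, J e0⟫ = (0:ℝ) := zxJx e0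
    have p10 : ⟪J e0, e0⟫ = (0:ℝ) := by rw [real_inner_comm e0 (J e0)]; exact p01
    have p02 : ⟪e0, e2⟫ = (0:ℝ) := ho1
    have p20 : ⟪e2, e0⟫ = (0:ℝ) := by rw [real_inner_comm e0 e2]; exact p02
    have p12 : ⟪J e0, e2⟫ = (0:ℝ) := ho2
    have p21 : ⟪e2, J e0⟫ = (0:ℝ) := by rw [real_inner_comm (J e0) e2]; exact p12
    have p13 : ⟪J e0, J e2⟫ = (0:ℝ) := by rw [hJinner]; exact p02
    have p31 : ⟪J e2, J e0⟫ = (0:ℝ) := by rw [real_inner_comm (J e0) (J e2)]; exact p13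
    have p23 : ⟪e2, J e2⟫ = (0:ℝ) := zxJx e2
    have p32 : ⟪J e2, e2⟫ = (0:ℝ) := by rw [real_inner_comm e2 (J e2)]; exact p23
    have p30 : ⟪J e2, e0⟫ = (0:ℝ) := by
      have h1 : ⟪J e2, e0⟫ = -⟪e2, J e0⟫ := skew e2 e0
      rw [h1, p21]; ring
    have p03 : ⟪e0, J e2⟫ = (0:ℝ) := by rw [real_inner_comm (J e2) e0]; exact p30
    have hon : Orthonormal ℝ ![e0, J e0, e2, J e2] := by
      rw [orthonormal_iff_ite]
      intro i j
      fin_cases i <;> fin_cases j <;>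
        simp +decide [p00, p01, p02, p03, p10, p11, p12, p13, p20, p21, p22, p23,
          p30, p31, p32, p33, -inner_self_eq_norm_sq_to_K]
    have hsp : ⊤ ≤ Submodule.span ℝ (Set.range ![e0, J e0, e2, J e2]) :=
      (hon.linearIndependent.span_eq_top_of_card_eq_finrank (by simp [h4])).ge
    set b : OrthonormalBasis (Fin 4) ℝ V := OrthonormalBasis.mk hon hsp with hbdef
    have hbf : ∀ i, b i = ![e0, J e0, e2, J e2] i := by
      intro i; rw [hbdef, OrthonormalBasis.coe_mk]
    have hb0 : b 0 = e0 := hbf 0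
    have hb1 : b 1 = J e0 := hbf 1
    have hb2 : b 2 = e2 := hbf 2
    have hb3 : b 3 = J e2 := hbf 3
    have hbor : b.toBasis.orientation = o := by
      apply hJor b
      · rw [hb1, hb0]
      · rw [hb3, hb2]
    obtain ⟨H1, -, -⟩ := hodge_wedge b hbor
    rw [hb0, hb1, hb2, hb3] at H1
    set σ : L := wedge e0 (J e0) + wedge e2 (J e2) with hσdef
    have hsd : hodge σ = σ := by
      rw [hσdef, map_add, H1, show hodge (wedge e2 (J e2)) = wedge e0 (J e0) from by
        rw [← H1, hodge_hodge]]
      abel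
    have hss : ⟪σ, σ⟫ = 1 := by
      rw [hσdef]
      simp only [inner_add_left, inner_add_right, inner_wedge]
      rw [p00, p11, p22, p33, p01, p02, p03, p10, p12, p13, p20, p21, p23, p30, p31, p32]
      ring
    have hns : ‖σ‖ = 1 := by
      have h := real_inner_self_eq_norm_mul_norm σ
      rw [hss] at h
      have hfac : (‖σ‖ - 1) * (‖σ‖ + 1) = 0 := by nlinarith
      rcases mul_eq_zero.mp hfac with h' | h'
      · linarith
      · have := norm_nonneg σ; linarith
    refine ⟨σ, ⟨hsd, hns⟩, ?_⟩
    apply Module.Basis.ext b.toBasis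
    intro i
    simp only [OrthonormalBasis.coe_toBasis]
    apply aux_vec_ext b
    intro k
    rw [real_inner_comm (K σ (b i)) (b k), hK]
    fin_cases i <;> fin_cases k <;>
      simp +decide [hb0, hb1, hb2, hb3, hσdef, inner_add_left, inner_wedge, hJJ',
        p00, p01, p02, p03, p10, p11, p12, p13, p20, p21, p22, p23, p30, p31, p32, p33,
        inner_neg_left, inner_neg_right, -inner_self_eq_norm_sq_to_K]
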